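/- Let T be a quasitriangular bounded linear operator on a complex Hilbert space H and let {P_n} be a corresponding filtration, i.e. ‖(I−P_n) T P_n‖ → 0. Let T_n = P_n T restricted to Ran P_n. Then for every λ ∈ ℂ, j_{T_n}(λ) converges to j_T(λ) as n → ∞. -/

import Mathlib

open Filter ContinuousLinearMap

/-- The injectivity radius `j_T(z) = inf {‖(T - z)h‖ : ‖h‖ = 1}`. -/
noncomputable def injRad {H : Type*} [NormedAddCommGroup H] [InnerProductSpace ℂ H]
    (T : H →L[ℂ] H) (z : ℂ) : ℝ :=
  sInf {r : ℝ | ∃ h : H, ‖h‖ = 1 ∧ r = ‖T h - z • h‖}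

/-- `j_{Tₙ}(z) = inf {‖Pₙ T h - z h‖ : h ∈ Ran Pₙ, ‖h‖ = 1}` for the finite section
`Tₙ = Pₙ T|_{Ran Pₙ}`. -/
noncomputable def injRadSec {H : Type*} [NormedAddCommGroup H] [InnerProductSpace ℂ H]
    (T P : H →L[ℂ] H) (z : ℂ) : ℝ :=
  sInf {r : ℝ | ∃ h : H, h ∈ LinearMap.range (P : H →ₗ[ℂ] H) ∧ ‖h‖ = 1 ∧ r = ‖P (T h) - z • h‖}

/-- A filtration: an increasing sequence of finite-rank orthogonal projections
whose ranges have dense union. -/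
structure Filtration (H : Type*) [NormedAddCommGroup H] [InnerProductSpace ℂ H]
    [CompleteSpace H] where
  P : ℕ → H →L[ℂ] H
  idem : ∀ n, (P n) ∘L (P n) = P n
  selfadj : ∀ n, IsSelfAdjoint (P n)
  finiteRank : ∀ n, FiniteDimensional ℂ (LinearMap.range (P n : H →ₗ[ℂ] H))
  mono : ∀ n, LinearMap.range (P n : H →ₗ[ℂ] H) ≤ LinearMap.range (P (n + 1) : H →ₗ[ℂ] H)
  dense : Dense (⋃ n, (LinearMap.range (P n : H →ₗ[ℂ] H) : Set H))

lemma proj_norm_apply_le {H : Type*} [NormedAddCommGroup H] [InnerProductSpace ℂ H]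
    [CompleteSpace H] (P : H →L[ℂ] H) (hidem : P ∘L P = P) (hsa : IsSelfAdjoint P) (x : H) :
    ‖P x‖ ≤ ‖x‖ := by
  rcases eq_or_ne (P x) 0 with h0 | h0
  · simp [h0]
  have hPP : P (P x) = P x := by
    conv_rhs => rw [← hidem]
    rfl
  have hadj : ContinuousLinearMap.adjoint P = P := by
    rw [← star_eq_adjoint]; exact hsa
  have h1 : (inner ℂ (P x) (P x) : ℂ) = inner ℂ x (P x) := by
    nth_rewrite 1 [← hadj]
    rw [ContinuousLinearMap.adjoint_inner_left, hPP]
  have h2 : (‖P x‖ : ℝ) ^ 2 = RCLike.re (inner ℂ x (P x) : ℂ) := by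
    rw [← h1, inner_self_eq_norm_sq]
  have h3 : RCLike.re (inner ℂ x (P x) : ℂ) ≤ ‖x‖ * ‖P x‖ := by
    calc RCLike.re (inner ℂ x (P x) : ℂ) ≤ ‖(inner ℂ x (P x) : ℂ)‖ := RCLike.re_le_norm _
      _ ≤ ‖x‖ * ‖P x‖ := norm_inner_le_norm _ _
  have hpos : 0 < ‖P x‖ := norm_pos_iff.mpr h0
  nlinarith

theorem injRadSec_tendsto {H : Type*} [NormedAddCommGroup H] [InnerProductSpace ℂ H] [CompleteSpace H]
    (T : H →L[ℂ] H) (F : Filtration H)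
    (hF : Tendsto (fun n => ‖((1 : H →L[ℂ] H) - F.P n) ∘L T ∘L F.P n‖) atTop (nhds 0))
    (lam : ℂ) :
    Tendsto (fun n => injRadSec T (F.P n) lam) atTop (nhds (injRad T lam)) := by
  set ε : ℕ → ℝ := fun n => ‖((1 : H →L[ℂ] H) - F.P n) ∘L T ∘L F.P n‖ with hεdef
  set Sj : Set ℝ := {r : ℝ | ∃ h : H, ‖h‖ = 1 ∧ r = ‖T h - lam • h‖} with hSj
  set Sn : ℕ → Set ℝ := fun n =>
    {r : ℝ | ∃ h : H, h ∈ LinearMap.range (F.P n : H →ₗ[ℂ] H) ∧ ‖h‖ = 1 ∧ r = ‖F.P n (T h) - lam • h‖}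
    with hSn
  have hjdef : injRad T lam = sInf Sj := rfl
  have hjndef : ∀ n, injRadSec T (F.P n) lam = sInf (Sn n) := fun n => rfl
  -- basic facts
  have hPfix : ∀ n (h : H), h ∈ LinearMap.range (F.P n : H →ₗ[ℂ] H) → F.P n h = h := by
    rintro n h ⟨y, rfl⟩
    conv_rhs => rw [← F.idem n]
    rfl
  have hcontr : ∀ n (x : H), ‖F.P n x‖ ≤ ‖x‖ :=
    fun n => proj_norm_apply_le (F.P n) (F.idem n) (F.selfadj n)
  have hrmono : ∀ m n : ℕ, m ≤ n → LinearMap.range (F.P m : H →ₗ[ℂ] H) ≤ LinearMap.range (F.P n : H →ₗ[ℂ] H) := by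
    intro m n hmn
    induction hmn with
    | refl => exact le_rfl
    | step _ ih => exact ih.trans (F.mono _)
  have hSnBdd : ∀ n, BddBelow (Sn n) := by
    intro n
    refine ⟨0, ?_⟩
    rintro r ⟨h, _, _, rfl⟩
    positivity
  have hSjBdd : BddBelow Sj := by
    refine ⟨0, ?_⟩
    rintro r ⟨h, _, rfl⟩
    positivity
  -- degenerate case: no unit vectors
  by_cases hH : ∃ u : H, ‖u‖ = 1
  swap
  · have hj0 : injRad T lam = 0 := by
      rw [hjdef]
      have : Sj = ∅ := by
        ext r
        simp only [hSj, Set.mem_setOf_eq, Set.mem_empty_iff_false, iff_false]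
        rintro ⟨h, h1, -⟩
        exact hH ⟨h, h1⟩
      rw [this, Real.sInf_empty]
    have hjn0 : ∀ n, injRadSec T (F.P n) lam = 0 := by
      intro n
      rw [hjndef]
      have : Sn n = ∅ := by
        ext r
        simp only [hSn, Set.mem_setOf_eq, Set.mem_empty_iff_false, iff_false]
        rintro ⟨h, -, h1, -⟩
        exact hH ⟨h, h1⟩
      rw [this, Real.sInf_empty]
    simp only [hjn0, hj0]
    exact tendsto_const_nhds
  obtain ⟨u, hu⟩ := hH
  have hSjne : Sj.Nonempty := ⟨‖T u - lam • u‖, u, hu, rfl⟩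
  -- a unit vector living in all large enough sections
  have key : ∀ (h : H), ‖h‖ = 1 → ∀ δ' : ℝ, 0 < δ' → δ' ≤ 1 / 2 →
      ∃ (m : ℕ) (w : H), w ∈ LinearMap.range (F.P m : H →ₗ[ℂ] H) ∧ ‖w‖ = 1 ∧ ‖w - h‖ ≤ 2 * δ' := by
    intro h h1 δ' hδ' hδ'half
    obtain ⟨g, hgmem, hgdist⟩ : ∃ g ∈ ⋃ n, (LinearMap.range (F.P n : H →ₗ[ℂ] H) : Set H), dist h g < δ' := by
      have := F.dense h
      rw [Metric.mem_closure_iff] at this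
      exact this δ' hδ'
    obtain ⟨s, ⟨m, rfl⟩, hgs⟩ := hgmem
    have hgh : ‖g - h‖ < δ' := by
      rw [dist_eq_norm] at hgdist
      rw [← norm_neg]
      simpa [neg_sub] using hgdist
    have hgnorm : |‖g‖ - 1| < δ' := by
      calc |‖g‖ - 1| = |‖g‖ - ‖h‖| := by rw [h1]
        _ ≤ ‖g - h‖ := abs_norm_sub_norm_le _ _
        _ < δ' := hgh
    have hgpos : 0 < ‖g‖ := by
      have := abs_lt.mp hgnorm
      linarith
    refine ⟨m, ‖g‖⁻¹ • g, ?_, ?_, ?_⟩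
    · exact Submodule.smul_mem _ _ hgs
    · rw [norm_smul]
      simp [norm_inv, abs_of_pos hgpos, inv_mul_cancel₀ hgpos.ne']
    · have h2 : ‖(‖g‖⁻¹ • g) - g‖ = |1 - ‖g‖| := by
        have : (‖g‖⁻¹ • g) - g = (‖g‖⁻¹ - 1) • g := by rw [sub_smul, one_smul]
        rw [this, norm_smul, Real.norm_eq_abs,
          show |‖g‖⁻¹ - 1| * ‖g‖ = |(‖g‖⁻¹ - 1) * ‖g‖| from by rw [abs_mul, abs_of_pos hgpos]]
        congr 1
        rw [sub_mul, inv_mul_cancel₀ hgpos.ne', one_mul]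
      calc ‖(‖g‖⁻¹ • g) - h‖ ≤ ‖(‖g‖⁻¹ • g) - g‖ + ‖g - h‖ := by
            have := norm_sub_le_norm_sub_add_norm_sub (‖g‖⁻¹ • g) g h
            exact this
        _ ≤ |1 - ‖g‖| + ‖g - h‖ := by rw [h2]
        _ ≤ δ' + δ' := by
            rw [abs_sub_comm] at hgnorm
            exact add_le_add hgnorm.le hgh.le
        _ = 2 * δ' := by ring
  -- Claim A : eventually, injRad ≤ injRadSec + ε n
  obtain ⟨m₀, w₀, hw₀mem, hw₀norm, -⟩ := key u hu (1/2) (by norm_num) le_rfl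
  have claimA : ∀ n, m₀ ≤ n → injRad T lam ≤ injRadSec T (F.P n) lam + ε n := by
    intro n hn
    have hw : w₀ ∈ LinearMap.range (F.P n : H →ₗ[ℂ] H) := hrmono m₀ n hn hw₀mem
    have hSnne : (Sn n).Nonempty :=
      ⟨‖F.P n (T w₀) - lam • w₀‖, w₀, hw, hw₀norm, rfl⟩
    rw [hjndef]
    rw [← sub_le_iff_le_add]
    apply le_csInf hSnne
    rintro r ⟨h, hmem, h1, rfl⟩
    rw [sub_le_iff_le_add]
    have hTh : injRad T lam ≤ ‖T h - lam • h‖ := csInf_le hSjBdd ⟨h, h1, rfl⟩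
    have hsplit : ‖T h - lam • h‖ ≤ ‖F.P n (T h) - lam • h‖ + ε n := by
      have heq : T h - lam • h = (F.P n (T h) - lam • h) + (T h - F.P n (T h)) := by abel
      have hrem : ‖T h - F.P n (T h)‖ ≤ ε n := by
        have : T h - F.P n (T h) = (((1 : H →L[ℂ] H) - F.P n) ∘L T ∘L F.P n) h := by
          simp [ContinuousLinearMap.comp_apply, ContinuousLinearMap.sub_apply,
            hPfix n h hmem]
        rw [this]
        calc ‖(((1 : H →L[ℂ] H) - F.P n) ∘L T ∘L F.P n) h‖
            ≤ ε n * ‖h‖ := le_opNorm _ _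
          _ = ε n := by rw [h1, mul_one]
      calc ‖T h - lam • h‖ ≤ ‖F.P n (T h) - lam • h‖ + ‖T h - F.P n (T h)‖ := by
            rw [heq]; exact norm_add_le _ _
        _ ≤ ‖F.P n (T h) - lam • h‖ + ε n := by linarith
    linarith
  -- Claim B : for all δ > 0, eventually injRadSec < injRad + δ
  have claimB : ∀ δ : ℝ, 0 < δ → ∀ᶠ n in atTop, injRadSec T (F.P n) lam < injRad T lam + δ := by
    intro δ hδ
    set C : ℝ := ‖T‖ + ‖lam‖ + 1 with hC
    have hCpos : 0 < C := by positivity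
    obtain ⟨r, ⟨h, h1, rfl⟩, hrlt⟩ :=
      exists_lt_of_csInf_lt hSjne (show sInf Sj < injRad T lam + δ / 2 by
        rw [← hjdef]; linarith)
    set δ' : ℝ := min (δ / (8 * C)) (1 / 2) with hδ'def
    have hδ'pos : 0 < δ' := lt_min (by positivity) (by norm_num)
    obtain ⟨m, w, hwmem, hwnorm, hwh⟩ := key h h1 δ' hδ'pos (min_le_right _ _)
    rw [eventually_atTop]
    refine ⟨m, fun n hn => ?_⟩
    have hw : w ∈ LinearMap.range (F.P n : H →ₗ[ℂ] H) := hrmono m n hn hwmem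
    have step1 : injRadSec T (F.P n) lam ≤ ‖F.P n (T w) - lam • w‖ :=
      csInf_le (hSnBdd n) ⟨w, hw, hwnorm, rfl⟩
    have step2 : ‖F.P n (T w) - lam • w‖ ≤ ‖T w - lam • w‖ := by
      have heq : F.P n (T w) - lam • w = F.P n (T w - lam • w) := by
        rw [map_sub, map_smul, hPfix n w hw]
      rw [heq]
      exact hcontr n _
    have step3 : ‖T w - lam • w‖ ≤ ‖T h - lam • h‖ + C * (2 * δ') := by
      have heq : T w - lam • w = (T h - lam • h) + (T (w - h) - lam • (w - h)) := by
        rw [map_sub, smul_sub]; abel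
      have hbnd : ‖T (w - h) - lam • (w - h)‖ ≤ C * (2 * δ') := by
        calc ‖T (w - h) - lam • (w - h)‖ ≤ ‖T (w - h)‖ + ‖lam • (w - h)‖ := norm_sub_le _ _
          _ ≤ ‖T‖ * ‖w - h‖ + ‖lam‖ * ‖w - h‖ := by
              gcongr
              · exact le_opNorm _ _
              · rw [norm_smul]
          _ = (‖T‖ + ‖lam‖) * ‖w - h‖ := by ring
          _ ≤ C * (2 * δ') := by
              apply mul_le_mul _ hwh (norm_nonneg _) hCpos.le
              rw [hC]; linarith
      calc ‖T w - lam • w‖ ≤ ‖T h - lam • h‖ + ‖T (w - h) - lam • (w - h)‖ := by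
            rw [heq]; exact norm_add_le _ _
        _ ≤ ‖T h - lam • h‖ + C * (2 * δ') := by linarith
    have hδ'small : C * (2 * δ') ≤ δ / 2 := by
      have : δ' ≤ δ / (8 * C) := min_le_left _ _
      have h8 : C * (2 * (δ / (8 * C))) = δ / 4 := by field_simp; ring
      nlinarith
    calc injRadSec T (F.P n) lam ≤ ‖T w - lam • w‖ := step1.trans step2
      _ ≤ ‖T h - lam • h‖ + C * (2 * δ') := step3
      _ < (injRad T lam + δ / 2) + δ / 2 := by linarith
      _ = injRad T lam + δ := by ring
  -- assemble
  rw [Metric.tendsto_atTop]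
  intro δ hδ
  have hεsmall : ∀ᶠ n in atTop, ε n < δ / 2 :=
    hF.eventually (gt_mem_nhds (by linarith))
  have hB := claimB (δ / 2) (by linarith)
  have hA : ∀ᶠ n in atTop, injRad T lam ≤ injRadSec T (F.P n) lam + ε n :=
    eventually_atTop.mpr ⟨m₀, claimA⟩
  obtain ⟨N, hN⟩ := eventually_atTop.mp ((hεsmall.and hB).and hA)
  refine ⟨N, fun n hn => ?_⟩
  obtain ⟨⟨hε1, hB1⟩, hA1⟩ := hN n hn
  rw [Real.dist_eq, abs_lt]
  constructor <;> linarith
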